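/- Let P = {p₀, p₁, p₂, p₃, p₄} with p₀ = ε, p₁ = 0, p₂ = 00, p₃ = 1, p₄ = 11. For every infinite binary overlap-free word x and every n ≥ 1, there exist indices i₁, …, iₙ ∈ {0,1,2,3,4} and an infinite binary overlap-free word y such that x = p_{i₁}·μ(p_{i₂}·μ(p_{i₃}·μ(⋯ p_{iₙ}·μ(y) ⋯))); moreover the indices i₁, …, iₙ and the word y are uniquely determined by x and n. -/

import Mathlib

/-- An overlap: a word of the form a x a x a, with `a` a single letter. -/
def Overlap (w : List (Fin 2)) : Prop :=
  ∃ (a : Fin 2) (x : List (Fin 2)), w = [a] ++ x ++ [a] ++ x ++ [a]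

/-- `w` occurs as a (contiguous) factor of the infinite word `x`. -/
def FactorOf (w : List (Fin 2)) (x : ℕ → Fin 2) : Prop :=
  ∃ i, w = (List.range w.length).map (fun j => x (i + j))

/-- An infinite binary word is overlap-free if no finite factor is an overlap. -/
def OverlapFree (x : ℕ → Fin 2) : Prop :=
  ∀ w, FactorOf w x → ¬ Overlap w

/-- The Thue–Morse morphism applied to an infinite word. -/
def mu (x : ℕ → Fin 2) : ℕ → Fin 2 :=
  fun n => if n % 2 = 0 then x (n / 2) else 1 - x (n / 2)

/-- Prepend a finite word to an infinite word. -/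
def prepend (p : List (Fin 2)) (w : ℕ → Fin 2) : ℕ → Fin 2 :=
  fun n => if h : n < p.length then p.get ⟨n, h⟩ else w (n - p.length)

/-- `x` begins with the finite word `p`. -/
def BeginsWith (x : ℕ → Fin 2) (p : List (Fin 2)) : Prop :=
  ∀ i < p.length, x i = p.getD i 0

/-- The five prefix words p₀ = ε, p₁ = 0, p₂ = 00, p₃ = 1, p₄ = 11. -/
def pword : Fin 5 → List (Fin 2)
  | 0 => []
  | 1 => [0]
  | 2 => [0, 0]
  | 3 => [1]
  | 4 => [1, 1]

/-- `nest [i₁, …, iₙ] y = p_{i₁} μ(p_{i₂} μ(⋯ p_{iₙ} μ(y) ⋯))`. -/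
def nest : List (Fin 5) → (ℕ → Fin 2) → (ℕ → Fin 2)
  | [], y => y
  | i :: r, y => prepend (pword i) (mu (nest r y))

namespace RS

lemma fin2_ne {a b : Fin 2} (h : a ≠ b) : b = 1 - a := by
  revert h; fin_cases a <;> fin_cases b <;> decide

lemma fin2_ne' (a : Fin 2) : a ≠ 1 - a := by fin_cases a <;> decide

lemma fin2_sub_sub (a : Fin 2) : 1 - (1 - a) = a := by fin_cases a <;> decide

lemma factorOf_of_getElem (w : List (Fin 2)) (x : ℕ → Fin 2) (i : ℕ)
    (h : ∀ j (hj : j < w.length), w[j] = x (i + j)) : FactorOf w x := by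
  refine ⟨i, ?_⟩
  apply List.ext_getElem (by simp)
  intro j h1 h2
  simpa using h j h1

lemma getElem_of_factor {w : List (Fin 2)} {x : ℕ → Fin 2} {i : ℕ}
    (hw : w = (List.range w.length).map (fun j => x (i + j)))
    (j : ℕ) (hj : j < w.length) : w[j] = x (i + j) := by
  have h2 : w[j]? = some (x (i + j)) := by
    conv_lhs => rw [hw]
    simp [List.getElem?_map, List.getElem?_range, hj]
  simpa [List.getElem?_eq_getElem hj] using h2

lemma no_cube {x : ℕ → Fin 2} (hx : OverlapFree x) (i : ℕ)
    (h1 : x i = x (i+1)) (h2 : x (i+1) = x (i+2)) : False := by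
  apply hx [x i, x i, x i] ?_ ⟨x i, [], by simp⟩
  apply factorOf_of_getElem _ _ i
  intro j hj
  have hj3 : j < 3 := by simpa using hj
  interval_cases j <;> simp_all

lemma no_alt5 {x : ℕ → Fin 2} (hx : OverlapFree x) (i : ℕ)
    (h : ∀ j < 4, x (i+j) ≠ x (i+j+1)) : False := by
  set a := x i with ha
  have h1 : x (i+1) = 1 - a := fin2_ne (by simpa using h 0 (by norm_num))
  have h2 : x (i+2) = a := by
    have := fin2_ne (h 1 (by norm_num)); rw [show i+1+1 = i+2 from rfl] at this
    rw [this, h1, fin2_sub_sub]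
  have h3 : x (i+3) = 1 - a := by
    have := fin2_ne (h 2 (by norm_num)); rw [show i+2+1 = i+3 from rfl] at this
    rw [this, h2]
  have h4 : x (i+4) = a := by
    have := fin2_ne (h 3 (by norm_num)); rw [show i+3+1 = i+4 from rfl] at this
    rw [this, h3, fin2_sub_sub]
  apply hx [a, 1-a, a, 1-a, a] ?_ ⟨a, [1-a], by simp⟩
  apply factorOf_of_getElem _ _ i
  intro j hj
  have hj5 : j < 5 := by simpa using hj
  interval_cases j <;> simp_all


lemma dbl_gap {x : ℕ → Fin 2} (hx : OverlapFree x) :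
    ∀ g j, 1 ≤ j → x j = x (j+1) → x (j+g) = x (j+g+1) → g % 2 = 0 := by
  intro g
  induction g using Nat.strong_induction_on with
  | _ g IH =>
    intro j hj hdj hdl
    by_contra hodd
    have hg1 : g % 2 = 1 := by omega
    by_cases hm : ∃ m, 0 < m ∧ m < g ∧ x (j+m) = x (j+m+1)
    · obtain ⟨m, hm0, hmg, hdm⟩ := hm
      have e1 : m % 2 = 0 := IH m hmg j hj hdj hdm
      have e2 : (g - m) % 2 = 0 := by
        apply IH (g-m) (by omega) (j+m) (by omega) hdm
        rw [show j+m+(g-m) = j+g by omega]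
        exact hdl
      omega
    · push_neg at hm
      rcases (show g = 1 ∨ g = 3 ∨ 5 ≤ g by omega) with h1 | h3 | h5
      · subst h1
        exact no_cube hx j hdj (by rw [show j+1+1 = j+2 by omega, show j+2 = j+1+1 by omega]; exact hdl)
      · subst h3
        obtain ⟨p, rfl⟩ : ∃ p, j = p + 1 := ⟨j-1, by omega⟩
        set a := x (p+1) with ha
        have v2 : x (p+2) = a := by rw [show p+2 = p+1+1 by omega]; exact hdj.symm
        have v3 : x (p+3) = 1 - a := by
          have hne : x (p+2) ≠ x (p+3) := by
            have := hm 1 (by omega) (by omega)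
            rw [show p+1+1 = p+2 by omega, show p+2+1 = p+3 by omega] at this
            exact this
          have := fin2_ne hne; rw [v2] at this; exact this
        have v4 : x (p+4) = a := by
          have hne : x (p+3) ≠ x (p+4) := by
            have := hm 2 (by omega) (by omega)
            rw [show p+1+2 = p+3 by omega, show p+3+1 = p+4 by omega] at this
            exact this
          have := fin2_ne hne; rw [v3, fin2_sub_sub] at this; exact this
        have v5 : x (p+5) = a := by
          have := hdl
          rw [show p+1+3 = p+4 by omega, show p+4+1 = p+5 by omega] at this
          rw [← this, v4]
        have v6 : x (p+6) = 1 - a := by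
          have hne : x (p+5) ≠ x (p+6) := by
            intro h
            exact no_cube hx (p+4) (by rw [show p+4+1 = p+5 by omega]; exact v4.trans v5.symm)
              (by rw [show p+4+1 = p+5 by omega, show p+4+2 = p+6 by omega]; exact h)
          have := fin2_ne hne; rw [v5] at this; exact this
        have v0 : x p = 1 - a := by
          have hne : x (p+1) ≠ x p := by
            intro h
            exact no_cube hx p (by rw [show p+1 = p+1 by omega]; exact h.symm)
              (by rw [show p+2 = p+1+1 by omega] at v2; rw [v2, ← ha])
          exact fin2_ne hne
        apply hx [1-a, a, a, 1-a, a, a, 1-a] ?_ ⟨1-a, [a,a], by simp⟩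
        apply factorOf_of_getElem _ _ p
        intro jj hjl
        have hj7 : jj < 7 := by simpa using hjl
        interval_cases jj <;>
          simp only [List.getElem_cons_zero, List.getElem_cons_succ] <;>
          first
            | (rw [Nat.add_zero]; exact v0.symm)
            | exact ha
            | exact v2.symm
            | exact v3.symm
            | exact v4.symm
            | exact v5.symm
            | exact v6.symm
      · apply no_alt5 hx (j+1)
        intro jj hjj
        have := hm (jj+1) (by omega) (by omega)
        rw [show j+(jj+1) = j+1+jj by omega] at this
        exact this

lemma dbl_parity {x : ℕ → Fin 2} (hx : OverlapFree x) {j l : ℕ}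
    (hj : 1 ≤ j) (hl : 1 ≤ l) (hdj : x j = x (j+1)) (hdl : x l = x (l+1)) :
    j % 2 = l % 2 := by
  rcases le_total j l with h | h
  · have := dbl_gap hx (l - j) j hj hdj (by rw [show j+(l-j) = l by omega]; exact hdl)
    omega
  · have := dbl_gap hx (j - l) l hl hdl (by rw [show l+(j-l) = j by omega]; exact hdj)
    omega

lemma exists_dbl {x : ℕ → Fin 2} (hx : OverlapFree x) :
    ∃ d, 1 ≤ d ∧ x d = x (d+1) := by
  by_contra h
  push_neg at h
  apply no_alt5 hx 1
  intro j hj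
  exact h (1+j) (by omega)


def muW (w : List (Fin 2)) : List (Fin 2) := w.flatMap (fun a => [a, 1-a])

lemma muW_nil : muW [] = [] := rfl
lemma muW_cons (a : Fin 2) (t : List (Fin 2)) : muW (a :: t) = a :: (1-a) :: muW t := rfl

lemma muW_append (u v : List (Fin 2)) : muW (u ++ v) = muW u ++ muW v := by
  induction u with
  | nil => rfl
  | cons a t ih => simp [muW_cons, ih]

lemma muW_length (w : List (Fin 2)) : (muW w).length = 2 * w.length := by
  induction w with
  | nil => rfl
  | cons a t ih => simp [muW_cons, ih]; omega

lemma muW_getD_even (w : List (Fin 2)) (q : ℕ) (hq : q < w.length) :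
    (muW w).getD (2*q) 0 = w.getD q 0 := by
  induction w generalizing q with
  | nil => simp at hq
  | cons a t ih =>
    rcases q with _ | q
    · rfl
    · have hq' : q < t.length := by simpa using hq
      rw [muW_cons, show 2*(q+1) = 2*q+1+1 by omega, List.getD_cons_succ,
        List.getD_cons_succ, show (q+1 : ℕ) = q+1 from rfl, List.getD_cons_succ]
      exact ih q hq'

lemma muW_getD_odd (w : List (Fin 2)) (q : ℕ) (hq : q < w.length) :
    (muW w).getD (2*q+1) 0 = 1 - w.getD q 0 := by
  induction w generalizing q with
  | nil => simp at hq
  | cons a t ih =>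
    rcases q with _ | q
    · rfl
    · have hq' : q < t.length := by simpa using hq
      rw [muW_cons, show 2*(q+1)+1 = (2*q+1)+1+1 by omega, List.getD_cons_succ,
        List.getD_cons_succ, List.getD_cons_succ]
      exact ih q hq'

lemma factorOf_of_getD (w : List (Fin 2)) (x : ℕ → Fin 2) (i : ℕ)
    (h : ∀ j, j < w.length → w.getD j 0 = x (i + j)) : FactorOf w x := by
  apply factorOf_of_getElem _ _ i
  intro j hj
  have := h j hj
  rwa [List.getD_eq_getElem _ _ hj] at this

lemma getD_of_factor {w : List (Fin 2)} {y : ℕ → Fin 2} {i : ℕ}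
    (hw : w = (List.range w.length).map (fun j => y (i + j)))
    (j : ℕ) (hj : j < w.length) : w.getD j 0 = y (i + j) := by
  rw [List.getD_eq_getElem _ _ hj]
  exact getElem_of_factor hw j hj

lemma build {x : ℕ → Fin 2} (hx : OverlapFree x) (k : ℕ)
    (hpair : ∀ m, x (k + 2*m) ≠ x (k + 2*m + 1)) :
    OverlapFree (fun m => x (k + 2*m)) ∧
      ∀ n, mu (fun m => x (k + 2*m)) n = x (k + n) := by
  set y : ℕ → Fin 2 := fun m => x (k + 2*m) with hy
  have hmu : ∀ n, mu y n = x (k + n) := by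
    intro n
    rcases Nat.even_or_odd n with ⟨q, hn⟩ | ⟨q, hn⟩
    · subst hn
      have h2 : (q+q) % 2 = 0 := by omega
      have h3 : (q+q) / 2 = q := by omega
      simp only [mu, h2, h3, if_true, hy]
      rw [show k + 2*q = k + (q+q) by omega]
    · subst hn
      have h2 : ¬ ((2*q+1) % 2 = 0) := by omega
      have h3 : (2*q+1) / 2 = q := by omega
      simp only [mu, h3, if_neg h2, hy]
      have := fin2_ne (hpair q)
      rw [show k + (2*q+1) = k + 2*q + 1 by omega, this]
  refine ⟨?_, hmu⟩
  intro w hw hov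
  obtain ⟨a, X, hwf⟩ := hov
  obtain ⟨i0, hmap⟩ := hw
  have hyg : ∀ j, j < w.length → w.getD j 0 = y (i0 + j) := getD_of_factor hmap
  set W : List (Fin 2) := [a] ++ ([1-a] ++ muW X) ++ [a] ++ ([1-a] ++ muW X) ++ [a] with hW
  have hWmu : W ++ [1-a] = muW w := by
    rw [hwf]
    simp [muW_append, hW, muW_cons, muW_nil]
  have hwlen : w.length = 2 * X.length + 3 := by rw [hwf]; simp; omega
  have hWlen : W.length = 2 * w.length - 1 := by
    have := congrArg List.length hWmu
    rw [muW_length] at this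
    simp at this
    omega
  apply hx W ?_ ⟨a, [1-a] ++ muW X, by rw [hW]⟩
  apply factorOf_of_getD _ _ (k + 2*i0)
  intro j hj
  have hWj : W.getD j 0 = (muW w).getD j 0 := by
    rw [← hWmu, List.getD_append _ _ _ _ hj]
  rw [hWj]
  rcases Nat.even_or_odd j with ⟨q, hn⟩ | ⟨q, hn⟩
  · have hq : q < w.length := by omega
    have hj2 : j = 2*q := by omega
    subst hj2
    rw [muW_getD_even w q hq, hyg q hq]
    simp only [hy]
    congr 1
    omega
  · have hq : q < w.length := by omega
    have hj2 : j = 2*q + 1 := by omega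
    subst hj2
    rw [muW_getD_odd w q hq, hyg q hq]
    simp only [hy]
    have := fin2_ne (hpair (i0 + q))
    rw [← this]
    congr 1
    omega


lemma mu_even (y : ℕ → Fin 2) (m : ℕ) : mu y (2*m) = y m := by
  unfold mu
  rw [if_pos (by omega), show 2*m/2 = m by omega]

lemma mu_odd (y : ℕ → Fin 2) (m : ℕ) : mu y (2*m+1) = 1 - y m := by
  unfold mu
  rw [if_neg (by omega), show (2*m+1)/2 = m by omega]

lemma x_tail {p : List (Fin 2)} {y' x : ℕ → Fin 2}
    (h : x = prepend p (mu y')) (n : ℕ) : x (p.length + n) = mu y' n := by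
  rw [h]
  unfold prepend
  rw [dif_neg (by omega)]
  congr 1
  omega

lemma x_head {p : List (Fin 2)} {y' x : ℕ → Fin 2}
    (h : x = prepend p (mu y')) (j : ℕ) (hj : j < p.length) :
    x j = p.get ⟨j, hj⟩ := by
  rw [h]
  exact dif_pos hj

lemma prepend_pair {p : List (Fin 2)} {y' x : ℕ → Fin 2}
    (h : x = prepend p (mu y')) (m : ℕ) :
    x (p.length + 2*m) ≠ x (p.length + 2*m + 1) := by
  rw [show p.length + 2*m + 1 = p.length + (2*m+1) by omega, x_tail h, x_tail h,
    mu_even, mu_odd]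
  exact fin2_ne' _

lemma pair_contra {p : List (Fin 2)} {y' x : ℕ → Fin 2}
    (h : x = prepend p (mu y')) {d m : ℕ} (hm : p.length + 2*m = d)
    (hdd : x d = x (d+1)) : False := by
  have := prepend_pair h m
  rw [hm] at this
  exact this hdd

lemma y'_val {p : List (Fin 2)} {y' x : ℕ → Fin 2}
    (h : x = prepend p (mu y')) (m : ℕ) : y' m = x (p.length + 2*m) := by
  rw [x_tail h, mu_even]

lemma assemble {x y : ℕ → Fin 2} (i : Fin 5) (k : ℕ) (hk : (pword i).length = k)
    (hmu : ∀ n, mu y n = x (k + n))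
    (hpre : ∀ j (hj : j < (pword i).length), (pword i).get ⟨j, hj⟩ = x j) :
    x = prepend (pword i) (mu y) := by
  funext n
  unfold prepend
  split
  next h => exact (hpre n h).symm
  next h =>
    rw [hmu]
    congr 1
    omega


lemma fin2_cases (a : Fin 2) : a = 0 ∨ a = 1 := by fin_cases a <;> simp

lemma step {x : ℕ → Fin 2} (hx : OverlapFree x) :
    ∃ (i : Fin 5) (y : ℕ → Fin 2), OverlapFree y ∧ x = prepend (pword i) (mu y) ∧
      ∀ (i' : Fin 5) (y' : ℕ → Fin 2), x = prepend (pword i') (mu y') → i' = i ∧ y' = y := by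
  obtain ⟨d, hd1, hdd⟩ := exists_dbl hx
  by_cases hd2 : d % 2 = 1
  · have noE : ∀ n, 1 ≤ n → n % 2 = 0 → x n ≠ x (n+1) := by
      intro n h1 h2 hdn
      have := dbl_parity hx h1 hd1 hdn hdd
      omega
    by_cases h01 : x 0 = x 1
    · -- k = 2, i ∈ {2, 4}
      have hpair : ∀ m, x (2 + 2*m) ≠ x (2 + 2*m + 1) := fun m =>
        noE (2+2*m) (by omega) (by omega)
      obtain ⟨hyof, hmu⟩ := build hx 2 hpair
      have uniqy : ∀ (i' : Fin 5) (y' : ℕ → Fin 2), x = prepend (pword i') (mu y') →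
          (pword i').length = 2 → y' = (fun m => x (2 + 2*m)) := by
        intro i' y' h' hlen
        funext m
        rw [y'_val h' m, hlen]
      rcases fin2_cases (x 0) with h0 | h0
      · refine ⟨2, _, hyof, assemble 2 2 (by decide) hmu ?_, ?_⟩
        · intro j hj
          have hj2 : j < 2 := by simpa [pword] using hj
          interval_cases j
          · simp [pword, h0]
          · simp [pword, ← h01, h0]
        · intro i' y' h'
          fin_cases i'
          · exfalso
            have := prepend_pair h' 0
            simp only [pword, List.length_nil] at this
            exact this h01
          · exact absurd (pair_contra h' (m := (d-1)/2)
              (by simp [pword]; omega) hdd) not_false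
          · refine ⟨rfl, uniqy _ _ h' (by decide)⟩
          · exact absurd (pair_contra h' (m := (d-1)/2)
              (by simp [pword]; omega) hdd) not_false
          · exfalso
            have := x_head h' 0 (by decide)
            simp [pword] at this
            rw [h0] at this
            exact absurd this (by decide)
      · refine ⟨4, _, hyof, assemble 4 2 (by decide) hmu ?_, ?_⟩
        · intro j hj
          have hj2 : j < 2 := by simpa [pword] using hj
          interval_cases j
          · simp [pword, h0]
          · simp [pword, ← h01, h0]
        · intro i' y' h'
          fin_cases i'
          · exfalso
            have := prepend_pair h' 0
            simp only [pword, List.length_nil] at this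
            exact this h01
          · exact absurd (pair_contra h' (m := (d-1)/2)
              (by simp [pword]; omega) hdd) not_false
          · exfalso
            have := x_head h' 0 (by decide)
            simp [pword] at this
            rw [h0] at this
            exact absurd this (by decide)
          · exact absurd (pair_contra h' (m := (d-1)/2)
              (by simp [pword]; omega) hdd) not_false
          · refine ⟨rfl, uniqy _ _ h' (by decide)⟩
    · -- k = 0, i = 0
      have hpair : ∀ m, x (0 + 2*m) ≠ x (0 + 2*m + 1) := by
        intro m
        rcases Nat.eq_zero_or_pos m with rfl | hm
        · simpa using h01
        · exact noE (0+2*m) (by omega) (by omega)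
      obtain ⟨hyof, hmu⟩ := build hx 0 hpair
      refine ⟨0, _, hyof, assemble 0 0 (by decide) hmu ?_, ?_⟩
      · intro j hj
        simp [pword] at hj
      · intro i' y' h'
        fin_cases i'
        · refine ⟨rfl, ?_⟩
          funext m
          rw [y'_val h' m]
          simp [pword]
        · exact absurd (pair_contra h' (m := (d-1)/2)
            (by simp [pword]; omega) hdd) not_false
        · exfalso
          have ha := x_head h' 0 (by decide)
          have hb := x_head h' 1 (by decide)
          simp [pword] at ha hb
          exact h01 (ha.trans hb.symm)
        · exact absurd (pair_contra h' (m := (d-1)/2)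
            (by simp [pword]; omega) hdd) not_false
        · exfalso
          have ha := x_head h' 0 (by decide)
          have hb := x_head h' 1 (by decide)
          simp [pword] at ha hb
          exact h01 (ha.trans hb.symm)
  · -- d even : k = 1, i ∈ {1, 3}
    have noO : ∀ n, n % 2 = 1 → x n ≠ x (n+1) := by
      intro n h2 hdn
      have := dbl_parity hx (by omega) hd1 hdn hdd
      omega
    have hpair : ∀ m, x (1 + 2*m) ≠ x (1 + 2*m + 1) := fun m =>
      noO (1+2*m) (by omega)
    obtain ⟨hyof, hmu⟩ := build hx 1 hpair
    have uniqy : ∀ (i' : Fin 5) (y' : ℕ → Fin 2), x = prepend (pword i') (mu y') →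
        (pword i').length = 1 → y' = (fun m => x (1 + 2*m)) := by
      intro i' y' h' hlen
      funext m
      rw [y'_val h' m, hlen]
    rcases fin2_cases (x 0) with h0 | h0
    · refine ⟨1, _, hyof, assemble 1 1 (by decide) hmu ?_, ?_⟩
      · intro j hj
        have hj1 : j < 1 := by simpa [pword] using hj
        interval_cases j
        · simp [pword, h0]
      · intro i' y' h'
        fin_cases i'
        · exact absurd (pair_contra h' (m := d/2)
            (by simp [pword]; omega) hdd) not_false
        · refine ⟨rfl, uniqy _ _ h' (by decide)⟩
        · exact absurd (pair_contra h' (m := (d-2)/2)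
            (by simp [pword]; omega) hdd) not_false
        · exfalso
          have := x_head h' 0 (by decide)
          simp [pword] at this
          rw [h0] at this
          exact absurd this (by decide)
        · exact absurd (pair_contra h' (m := (d-2)/2)
            (by simp [pword]; omega) hdd) not_false
    · refine ⟨3, _, hyof, assemble 3 1 (by decide) hmu ?_, ?_⟩
      · intro j hj
        have hj1 : j < 1 := by simpa [pword] using hj
        interval_cases j
        · simp [pword, h0]
      · intro i' y' h'
        fin_cases i'
        · exact absurd (pair_contra h' (m := d/2)
            (by simp [pword]; omega) hdd) not_false
        · exfalso
          have := x_head h' 0 (by decide)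
          simp [pword] at this
          rw [h0] at this
          exact absurd this (by decide)
        · exact absurd (pair_contra h' (m := (d-2)/2)
            (by simp [pword]; omega) hdd) not_false
        · refine ⟨rfl, uniqy _ _ h' (by decide)⟩
        · exact absurd (pair_contra h' (m := (d-2)/2)
            (by simp [pword]; omega) hdd) not_false


lemma main_aux : ∀ n (x : ℕ → Fin 2), OverlapFree x →
    ∃ (l : List (Fin 5)) (y : ℕ → Fin 2),
      l.length = n ∧ OverlapFree y ∧ x = nest l y ∧
      ∀ (l' : List (Fin 5)) (y' : ℕ → Fin 2),
        l'.length = n → OverlapFree y' → x = nest l' y' → l = l' ∧ y = y' := by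
  intro n
  induction n with
  | zero =>
    intro x hx
    refine ⟨[], x, rfl, hx, rfl, ?_⟩
    intro l' y' hl _ hxy
    have hnil : l' = [] := List.length_eq_zero_iff.mp hl
    subst hnil
    exact ⟨rfl, hxy⟩
  | succ n ih =>
    intro x hx
    obtain ⟨i, z, hz, hxz, uniq1⟩ := step hx
    obtain ⟨l, y, hl, hy, hzl, uniq2⟩ := ih z hz
    refine ⟨i :: l, y, by simp [hl], hy, ?_, ?_⟩
    · show x = prepend (pword i) (mu (nest l y))
      rw [hxz, hzl]
    · intro l' y' hl' hy' hxy'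
      cases l' with
      | nil => simp at hl'
      | cons i' r' =>
        have h' : x = prepend (pword i') (mu (nest r' y')) := hxy'
        obtain ⟨hii, hzz⟩ := uniq1 i' (nest r' y') h'
        obtain ⟨hll, hyy⟩ := uniq2 r' y' (by simpa using hl') hy' hzz.symm
        exact ⟨by rw [hii, hll], hyy⟩

end RS

theorem iterated_restivo_salemi (x : ℕ → Fin 2) (hx : OverlapFree x)
    (n : ℕ) (hn : 1 ≤ n) :
    ∃ (l : List (Fin 5)) (y : ℕ → Fin 2),
      l.length = n ∧ OverlapFree y ∧ x = nest l y ∧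
      ∀ (l' : List (Fin 5)) (y' : ℕ → Fin 2),
        l'.length = n → OverlapFree y' → x = nest l' y' → l = l' ∧ y = y' := RS.main_aux n x hx
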